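/- Three loop repetitions do not suffice for the ratio pumping lemma: there exist rationals (with positive costs) r₀,...,r₃, c₀,...,c₃ and r₀',...,r₃', c₀',...,c₃' — namely (r,c) = (2,2),(2,1),(2,2),(1,1) and (r',c') = (1,2),(2,1),(1,1),(2,1) — such that removing any nonempty subset of the middle segments {1,2} yields equal ratios, i.e., (r₀+r₃)/(c₀+c₃) = (r₀'+r₃')/(c₀'+c₃'), (r₀+r₁+r₃)/(c₀+c₁+c₃) = (r₀'+r₁'+r₃')/(c₀'+c₁'+c₃'), (r₀+r₂+r₃)/(c₀+c₂+c₃) = (r₀'+r₂'+r₃')/(c₀'+c₂'+c₃'), yet the full ratios differ: (r₀+r₁+r₂+r₃)/(c₀+c₁+c₂+c₃) ≠ (r₀'+r₁'+r₂'+r₃')/(c₀'+c₁'+c₂'+c₃'). -/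

import Mathlib

/-- Three loop repetitions do not suffice for the ratio pumping lemma: concrete counterexample. -/
theorem ratio_three_repetitions_insufficient :
    ∃ r c r' c' : Fin 4 → ℚ,
      r = ![2, 2, 2, 1] ∧ c = ![2, 1, 2, 1] ∧ r' = ![1, 2, 1, 2] ∧ c' = ![2, 1, 1, 1] ∧
      (∀ i, 0 < c i) ∧ (∀ i, 0 < c' i) ∧
      (r 0 + r 3) / (c 0 + c 3) = (r' 0 + r' 3) / (c' 0 + c' 3) ∧
      (r 0 + r 1 + r 3) / (c 0 + c 1 + c 3) = (r' 0 + r' 1 + r' 3) / (c' 0 + c' 1 + c' 3) ∧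
      (r 0 + r 2 + r 3) / (c 0 + c 2 + c 3) = (r' 0 + r' 2 + r' 3) / (c' 0 + c' 2 + c' 3) ∧
      (r 0 + r 1 + r 2 + r 3) / (c 0 + c 1 + c 2 + c 3)
        ≠ (r' 0 + r' 1 + r' 2 + r' 3) / (c' 0 + c' 1 + c' 2 + c' 3) := by
  refine ⟨![2, 2, 2, 1], ![2, 1, 2, 1], ![1, 2, 1, 2], ![2, 1, 1, 1],
    rfl, rfl, rfl, rfl, ?_, ?_, by simp only [Matrix.cons_val]; norm_num, by simp only [Matrix.cons_val]; norm_num, by simp only [Matrix.cons_val]; norm_num, by simp only [Matrix.cons_val]; norm_num⟩ <;>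
  · intro i; fin_cases i <;> norm_num
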